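/- Let Y be a compact metric space, let μ be a Borel probability measure on Y with full support, and let c > 0. Let w₀ and w₁ be maps assigning to each y ∈ Y Borel probability measures w₀(y, ·) and w₁(y, ·) on Y, such that w₀(y, A) ≥ c·μ(A) for every y ∈ Y and every Borel set A ⊆ Y. Suppose a, b : Y → ℝ are continuous functions satisfying ∫_Y a dμ = 0 and, for all y₀, y₁ ∈ Y, a(y₀) + ∫_Y b(y₁') w₁(y₀, dy₁') = 0 and b(y₁) + ∫_Y a(y₀') w₀(y₁, dy₀') = 0. Then a ≡ 0 and b ≡ 0; that is, the linearized Sinkhorn operator is injective on the gauge-centered subspace of separable continuous functions. -/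

import Mathlib

open MeasureTheory
open scoped ENNReal

/-- injectivity of the linearized Sinkhorn operator on the gauge-centered
subspace: if `a, b` are continuous, `∫ a dμ = 0`, the kernels `w₀, w₁` are Markov
kernels with `w₀(y, ·) ≥ c·μ`, and `a(y₀) + ∫ b dw₁(y₀, ·) = 0`,
`b(y₁) + ∫ a dw₀(y₁, ·) = 0` for all `y₀, y₁`, then `a ≡ 0` and `b ≡ 0`. -/
theorem stmt15 {Y : Type*} [MetricSpace Y] [CompactSpace Y]
    [MeasurableSpace Y] [BorelSpace Y]
    (μ : Measure Y) [IsProbabilityMeasure μ]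
    (hfull : ∀ U : Set Y, IsOpen U → U.Nonempty → 0 < μ U)
    (c : ℝ) (hc : 0 < c)
    (w0 w1 : Y → Measure Y)
    (hw0 : ∀ y, IsProbabilityMeasure (w0 y)) (hw1 : ∀ y, IsProbabilityMeasure (w1 y))
    (hlow : ∀ y : Y, ∀ A : Set Y, MeasurableSet A → ENNReal.ofReal c * μ A ≤ w0 y A)
    (a b : Y → ℝ) (ha : Continuous a) (hb : Continuous b)
    (hgauge : ∫ y, a y ∂μ = 0)
    (heq1 : ∀ y₀ : Y, a y₀ + ∫ y₁', b y₁' ∂(w1 y₀) = 0)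
    (heq2 : ∀ y₁ : Y, b y₁ + ∫ y₀', a y₀' ∂(w0 y₁) = 0) :
    (∀ y, a y = 0) ∧ (∀ y, b y = 0) := by
  have hne : Nonempty Y := by
    by_contra h
    have h1 : μ Set.univ = 1 := measure_univ
    rw [Set.univ_eq_empty_iff.mpr (not_nonempty_iff.mp h), measure_empty] at h1
    exact zero_ne_one h1
  -- integrability of continuous functions w.r.t. finite measures on a compact space
  have hint : ∀ (f : Y → ℝ), Continuous f → ∀ (ν : Measure Y), IsProbabilityMeasure ν →
      Integrable f ν := by
    intro f hf ν hν
    exact hf.integrable_of_hasCompactSupport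
      (IsCompact.of_isClosed_subset isCompact_univ (isClosed_tsupport f) (Set.subset_univ _))
  -- measure domination
  have hdom : ∀ y : Y, (ENNReal.ofReal c) • μ ≤ w0 y := by
    intro y
    rw [Measure.le_iff]
    intro s hs
    simpa using hlow y s hs
  -- max and min of a
  obtain ⟨yM, -, hyM⟩ := isCompact_univ.exists_isMaxOn Set.univ_nonempty
    (ha.continuousOn (s := Set.univ))
  obtain ⟨ym, -, hym⟩ := isCompact_univ.exists_isMinOn Set.univ_nonempty
    (ha.continuousOn (s := Set.univ))
  set M := a yM with hM
  set m := a ym with hm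
  have hMle : ∀ y, a y ≤ M := fun y => hyM (Set.mem_univ y)
  have hmle : ∀ y, m ≤ a y := fun y => hym (Set.mem_univ y)
  have haw0 : ∀ y, ∫ y', a y' ∂(w0 y) = -b y := by
    intro y; have := heq2 y; linarith
  have hbw1 : ∀ y, ∫ y', b y' ∂(w1 y) = -a y := by
    intro y; have := heq1 y; linarith
  -- key bounds: for all y, c*M ≤ M + b y  and  m + b y ≤ c*m
  have key1 : ∀ y, c * M ≤ M + b y := by
    intro y
    haveI := hw0 y
    have hnn : (0 : Y → ℝ) ≤ᵐ[w0 y] fun y' => M - a y' :=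
      Filter.Eventually.of_forall fun y' => by simpa using sub_nonneg.mpr (hMle y')
    have hintw : Integrable (fun y' => M - a y') (w0 y) :=
      hint _ (continuous_const.sub ha) _ (hw0 y)
    have h := integral_mono_measure (hdom y) hnn hintw
    rw [integral_smul_measure] at h
    have hrw1 : ∫ y', (M - a y') ∂μ = M := by
      rw [integral_sub (hint _ continuous_const _ ‹_›) (hint _ ha _ ‹_›), hgauge]
      simp
    have hrw2 : ∫ y', (M - a y') ∂(w0 y) = M + b y := by
      rw [integral_sub (hint _ continuous_const _ (hw0 y)) (hint _ ha _ (hw0 y)), haw0 y]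
      simp
    rw [hrw1, hrw2] at h
    have : (ENNReal.ofReal c).toReal = c := ENNReal.toReal_ofReal hc.le
    rw [this] at h
    simpa using h
  have key2 : ∀ y, m + b y ≤ c * m := by
    intro y
    haveI := hw0 y
    have hnn : (0 : Y → ℝ) ≤ᵐ[w0 y] fun y' => a y' - m :=
      Filter.Eventually.of_forall fun y' => by simpa using sub_nonneg.mpr (hmle y')
    have hintw : Integrable (fun y' => a y' - m) (w0 y) :=
      hint _ (ha.sub continuous_const) _ (hw0 y)
    have h := integral_mono_measure (hdom y) hnn hintw
    rw [integral_smul_measure] at h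
    have hrw1 : ∫ y', (a y' - m) ∂μ = -m := by
      rw [integral_sub (hint _ ha _ ‹_›) (hint _ continuous_const _ ‹_›), hgauge]
      simp
    have hrw2 : ∫ y', (a y' - m) ∂(w0 y) = -b y - m := by
      rw [integral_sub (hint _ ha _ (hw0 y)) (hint _ continuous_const _ (hw0 y)), haw0 y]
      simp
    rw [hrw1, hrw2] at h
    have : (ENNReal.ofReal c).toReal = c := ENNReal.toReal_ofReal hc.le
    rw [this] at h
    simp only [smul_eq_mul] at h
    linarith
  -- a y = ∫ (-b) dw1 y ≤ (1-c) M and ≥ (1-c) m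
  have hub : ∀ y, a y ≤ M - c * M := by
    intro y
    haveI := hw1 y
    have h1 : a y = ∫ y', (-b y') ∂(w1 y) := by
      rw [integral_neg, hbw1 y]; ring
    have h2 : ∫ y', (-b y') ∂(w1 y) ≤ ∫ _y', (M - c * M) ∂(w1 y) := by
      apply integral_mono ((hint _ hb _ (hw1 y)).neg) (hint _ continuous_const _ (hw1 y))
      intro y'; have := key1 y'; simp only [Pi.neg_apply]; linarith
    rw [integral_const] at h2
    simp only [measure_univ, probReal_univ, ENNReal.toReal_one, one_smul] at h2
    linarith
  have hlb : ∀ y, m - c * m ≤ a y := by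
    intro y
    haveI := hw1 y
    have h1 : a y = ∫ y', (-b y') ∂(w1 y) := by
      rw [integral_neg, hbw1 y]; ring
    have h2 : ∫ _y', (m - c * m) ∂(w1 y) ≤ ∫ y', (-b y') ∂(w1 y) := by
      apply integral_mono (hint _ continuous_const _ (hw1 y)) ((hint _ hb _ (hw1 y)).neg)
      intro y'; have := key2 y'; simp only [Pi.neg_apply]; linarith
    rw [integral_const] at h2
    simp only [measure_univ, probReal_univ, ENNReal.toReal_one, one_smul] at h2
    linarith
  have hM0 : M ≤ 0 := by
    have := hub yM
    nlinarith
  have hm0 : 0 ≤ m := by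
    have := hlb ym
    nlinarith
  have ha0 : ∀ y, a y = 0 := by
    intro y
    have h1 := hMle y
    have h2 := hmle y
    linarith
  refine ⟨ha0, fun y => ?_⟩
  have := heq2 y
  have h0 : ∫ y₀', a y₀' ∂(w0 y) = 0 := by
    simp [ha0]
  linarith
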